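/- For every composite positive integer n with n ≠ 4, β(n) < n − 1. -/

import Mathlib

/-- The Liouville function `λ(n) = (-1)^Ω(n)`. -/
def lam (n : ℕ) : ℤ := (-1) ^ (ArithmeticFunction.cardFactors n)

/-- The alternating sum-of-divisors function `β(n) = ∑_{d ∣ n} d · λ(n/d)`. -/
def beta (n : ℕ) : ℤ := ∑ d ∈ n.divisors, (d : ℤ) * lam (n / d)

/-- The Liouville function as an arithmetic function. -/
def Lf : ArithmeticFunction ℤ := ⟨fun n => if n = 0 then 0 else lam n, if_pos rfl⟩

lemma Lf_apply {n : ℕ} (h : n ≠ 0) : Lf n = lam n := if_neg h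

lemma Lf_mult : Lf.IsMultiplicative := by
  constructor
  · show (if (1:ℕ) = 0 then (0:ℤ) else lam 1) = 1
    simp [lam]
  · intro m n h
    rcases eq_or_ne m 0 with rfl | hm
    · have hn : n = 1 := by simpa using h
      subst hn
      simp [Lf]
    rcases eq_or_ne n 0 with rfl | hn
    · simp [Lf]
    · rw [Lf_apply (mul_ne_zero hm hn), Lf_apply hm, Lf_apply hn]
      simp [lam, ArithmeticFunction.cardFactors_mul hm hn, pow_add]

/-- β as an arithmetic function. -/
def betaF : ArithmeticFunction ℤ :=
  ((ArithmeticFunction.id : ArithmeticFunction ℕ) : ArithmeticFunction ℤ) * Lf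

lemma betaF_mult : betaF.IsMultiplicative :=
  (ArithmeticFunction.isMultiplicative_id.natCast).mul Lf_mult

lemma beta_eq (n : ℕ) : beta n = betaF n := by
  rcases eq_or_ne n 0 with rfl | hn
  · simp [beta, betaF]
  · rw [betaF, ArithmeticFunction.mul_apply]
    simp only [ArithmeticFunction.natCoe_apply, ArithmeticFunction.id_apply]
    unfold beta
    rw [← Nat.sum_divisorsAntidiagonal (fun a b => (a : ℤ) * lam b)]
    refine Finset.sum_congr rfl fun x hx => ?_
    obtain ⟨hmul, hn0⟩ := Nat.mem_divisorsAntidiagonal.mp hx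
    have hx2 : x.2 ≠ 0 := fun h => hn0 (by rw [← hmul, h, mul_zero])
    rw [Lf_apply hx2]

lemma beta_mul {a b : ℕ} (h : Nat.Coprime a b) : beta (a * b) = beta a * beta b := by
  rw [beta_eq, beta_eq, beta_eq, betaF_mult.map_mul_of_coprime h]

/-- explicit value at prime powers -/
def g (p k : ℕ) : ℤ := ∑ i ∈ Finset.range (k + 1), (p : ℤ) ^ i * (-1) ^ (k - i)

lemma beta_prime_pow {p : ℕ} (hp : p.Prime) (k : ℕ) : beta (p ^ k) = g p k := by
  unfold beta g
  rw [Nat.sum_divisors_prime_pow hp]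
  refine Finset.sum_congr rfl fun i hi => ?_
  have hik : i ≤ k := Nat.lt_succ_iff.mp (Finset.mem_range.mp hi)
  rw [Nat.pow_div hik hp.pos, lam, ArithmeticFunction.cardFactors_apply_prime_pow hp]
  push_cast
  ring

lemma g_succ (p k : ℕ) : g p (k + 1) = (p : ℤ) ^ (k + 1) - g p k := by
  unfold g
  rw [Finset.sum_range_succ]
  have : ∀ i ∈ Finset.range (k + 1),
      (p : ℤ) ^ i * (-1) ^ (k + 1 - i) = -((p : ℤ) ^ i * (-1) ^ (k - i)) := by
    intro i hi
    have hik : i ≤ k := Nat.lt_succ_iff.mp (Finset.mem_range.mp hi)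
    have : k + 1 - i = (k - i) + 1 := by omega
    rw [this, pow_succ]
    ring
  rw [Finset.sum_congr rfl this, Finset.sum_neg_distrib]
  simp
  ring

lemma g_bounds {p : ℕ} (hp : 2 ≤ p) (k : ℕ) : 1 ≤ g p k ∧ g p k ≤ (p : ℤ) ^ k := by
  induction k with
  | zero => simp [g]
  | succ k ih =>
    rw [g_succ]
    have hpk : (1 : ℤ) ≤ (p : ℤ) ^ k := one_le_pow₀ (by exact_mod_cast hp.trans' one_le_two)
    have h2 : (2 : ℤ) ≤ (p : ℤ) := by exact_mod_cast hp
    constructor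
    · have : (p : ℤ) ^ (k + 1) = (p : ℤ) ^ k * p := by ring
      nlinarith [ih.2]
    · linarith [ih.1]

lemma g_le_sub_one {p : ℕ} (hp : 2 ≤ p) {k : ℕ} (hk : 1 ≤ k) :
    g p k ≤ (p : ℤ) ^ k - 1 := by
  cases k with
  | zero => omega
  | succ j =>
    rw [g_succ]
    linarith [(g_bounds hp j).1]

lemma one_le_beta {m : ℕ} (hm : 1 ≤ m) : 1 ≤ beta m ∧ beta m ≤ (m : ℤ) := by
  induction m using Nat.strong_induction_on with
  | _ m ih =>
    rcases eq_or_lt_of_le hm with h1 | h2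
    · simp [← h1, beta, lam]
    · -- m ≥ 2
      set p := m.minFac with hp
      have hpp : p.Prime := Nat.minFac_prime (by omega)
      set k := m.factorization p with hk
      set c := m / p ^ k with hc
      have hmpos : m ≠ 0 := by omega
      have hco : Nat.Coprime (p ^ k) c := (Nat.coprime_ordCompl hpp hmpos).pow_left k
      have hmc : p ^ k * c = m := Nat.ordProj_mul_ordCompl_eq_self m p
      have hk1 : 1 ≤ k := by
        rw [hk]
        exact (Nat.Prime.factorization_pos_of_dvd hpp hmpos (Nat.minFac_dvd m))
      have hcpos : 1 ≤ c := Nat.ordCompl_pos p hmpos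
      have hclt : c < m := by
        have h1pk : 1 < p ^ k := Nat.one_lt_pow (by omega) hpp.two_le
        have : c < p ^ k * c := by nlinarith
        omega
      have hbc := ih c hclt hcpos
      have hbm : beta m = g p k * beta c := by
        rw [← hmc, beta_mul hco, beta_prime_pow hpp]
      have hg := g_bounds hpp.two_le k
      constructor
      · rw [hbm]; exact one_le_mul_of_one_le_of_one_le hg.1 hbc.1
      · rw [hbm, ← hmc]
        push_cast
        exact mul_le_mul hg.2 hbc.2 (by linarith [hbc.1]) (by positivity)

lemma beta_le_sub_one {m : ℕ} (hm : 2 ≤ m) : beta m ≤ (m : ℤ) - 1 := by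
  set p := m.minFac with hp
  have hpp : p.Prime := Nat.minFac_prime (by omega)
  set k := m.factorization p with hk
  set c := m / p ^ k with hc
  have hmpos : m ≠ 0 := by omega
  have hco : Nat.Coprime (p ^ k) c := (Nat.coprime_ordCompl hpp hmpos).pow_left k
  have hmc : p ^ k * c = m := Nat.ordProj_mul_ordCompl_eq_self m p
  have hk1 : 1 ≤ k := Nat.Prime.factorization_pos_of_dvd hpp hmpos (Nat.minFac_dvd m)
  have hcpos : 1 ≤ c := Nat.ordCompl_pos p hmpos
  have hbc := one_le_beta hcpos
  have hbm : beta m = g p k * beta c := by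
    rw [← hmc, beta_mul hco, beta_prime_pow hpp]
  have hg1 := (g_bounds hpp.two_le k).1
  have hgle := g_le_sub_one hpp.two_le hk1
  have : beta m ≤ ((p : ℤ) ^ k - 1) * c := by
    rw [hbm]
    exact mul_le_mul hgle hbc.2 (by linarith [hbc.1]) (by linarith)
  have hcast : ((p : ℤ) ^ k) * c = (m : ℤ) := by exact_mod_cast congrArg (Nat.cast : ℕ → ℤ) hmc
  have hc1 : (1 : ℤ) ≤ (c : ℤ) := by exact_mod_cast hcpos
  nlinarith

theorem stmt_18 (n : ℕ) (hcomp : 1 < n ∧ ¬ n.Prime) (h4 : n ≠ 4) :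
    beta n < (n : ℤ) - 1 := by
  obtain ⟨hn1, hnp⟩ := hcomp
  set p := n.minFac with hp
  have hpp : p.Prime := Nat.minFac_prime (by omega)
  set k := n.factorization p with hk
  set c := n / p ^ k with hc
  have hnpos : n ≠ 0 := by omega
  have hco : Nat.Coprime (p ^ k) c := (Nat.coprime_ordCompl hpp hnpos).pow_left k
  have hnc : p ^ k * c = n := Nat.ordProj_mul_ordCompl_eq_self n p
  have hk1 : 1 ≤ k := Nat.Prime.factorization_pos_of_dvd hpp hnpos (Nat.minFac_dvd n)
  have hcpos : 1 ≤ c := Nat.ordCompl_pos p hnpos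
  have hbm : beta n = g p k * beta c := by
    rw [← hnc, beta_mul hco, beta_prime_pow hpp]
  have hcast : ((p : ℤ) ^ k) * c = (n : ℤ) := by exact_mod_cast congrArg (Nat.cast : ℕ → ℤ) hnc
  clear_value k c
  rcases eq_or_lt_of_le hcpos with h1 | h2
  · -- n = p ^ k, k ≥ 2
    have hn_eq : p ^ k = n := by rw [← hnc, ← h1, mul_one]
    have hk2 : 2 ≤ k := by
      by_contra h
      have hkk : k = 1 := by omega
      apply hnp
      rw [← hn_eq, hkk, pow_one]
      exact hpp
    -- need g p k < p^k - 1, i.e., g p (k-1) ≥ 2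
    obtain ⟨j, rfl⟩ : ∃ j, k = j + 1 := ⟨k - 1, by omega⟩
    have hj1 : 1 ≤ j := by omega
    have hg2 : 2 ≤ g p j := by
      obtain ⟨i, rfl⟩ : ∃ i, j = i + 1 := ⟨j - 1, by omega⟩
      rw [g_succ]
      have hgi := (g_bounds hpp.two_le i).2
      have hpge : (2 : ℤ) ≤ (p : ℤ) := by exact_mod_cast hpp.two_le
      have key : (p : ℤ) ^ i * ((p : ℤ) - 1) ≥ 2 := by
        rcases eq_or_ne i 0 with rfl | hi0
        · -- p^1 * ... : j = 1, k = 2, so n = p^2 ≠ 4 means p ≥ 3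
          have hp3 : 3 ≤ p := by
            rcases eq_or_lt_of_le hpp.two_le with h2p | h3p
            · exfalso; apply h4; rw [← hn_eq, ← h2p]; norm_num
            · exact h3p
          have : (3 : ℤ) ≤ (p : ℤ) := by exact_mod_cast hp3
          simpa using by linarith
        · have hi1 : 1 ≤ i := Nat.one_le_iff_ne_zero.mpr hi0
          have : (2 : ℤ) ≤ (p : ℤ) ^ i := by
            calc (2 : ℤ) ≤ (p : ℤ) ^ 1 := by simpa using hpge
            _ ≤ (p : ℤ) ^ i := pow_le_pow_right₀ (by linarith) hi1
          nlinarith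
      have : (p : ℤ) ^ (i + 1) - (p:ℤ) ^ i = (p : ℤ) ^ i * ((p : ℤ) - 1) := by ring
      linarith
    have hbc1 : beta c = 1 := by rw [← h1]; simp [beta, lam]
    rw [hbm, hbc1, mul_one, g_succ]
    have : ((p : ℤ) ^ (j + 1)) = (n : ℤ) := by
      rw [← hcast, ← h1]; push_cast; ring
    linarith
  · -- c ≥ 2 : n = p^k * c with both parts ≥ 2
    have hbc := one_le_beta (by omega : 1 ≤ c)
    have hbc' := beta_le_sub_one h2
    have hg1 := (g_bounds hpp.two_le k).1
    have hgle := g_le_sub_one hpp.two_le hk1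
    have hpk2 : (2 : ℤ) ≤ (p : ℤ) ^ k := by
      have : 2 ≤ p ^ k := (hpp.two_le).trans (Nat.le_self_pow (by omega) p)
      exact_mod_cast this
    have hc2 : (2 : ℤ) ≤ (c : ℤ) := by exact_mod_cast h2
    have : beta n ≤ ((p : ℤ) ^ k - 1) * ((c : ℤ) - 1) := by
      rw [hbm]
      exact mul_le_mul hgle hbc' (by linarith [hbc.1]) (by linarith)
    nlinarith
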